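/- Let q be a prime power and let s, t be positive integers. Then the number of matrices A ∈ F_q^{s×t} with rank A = min(s, t) is strictly greater than (1 − τ(q^{−|s−t|−1})) · q^{st}. Equivalently, a uniformly random A ∈ F_q^{s×t} has full rank with probability greater than 1 − τ(q^{−|s−t|−1}). -/

import Mathlib

noncomputable def tau (x : ℝ) : ℝ := min 0.72 (2.1 * x)

open Finset

lemma weier (s : Finset ℕ) (f : ℕ → ℝ) (h0 : ∀ i ∈ s, 0 ≤ f i) (h1 : ∀ i ∈ s, f i ≤ 1) :
    1 - ∑ i ∈ s, f i ≤ ∏ i ∈ s, (1 - f i) := by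
  induction s using Finset.cons_induction with
  | empty => simp
  | cons a s ha ih =>
    rw [Finset.sum_cons, Finset.prod_cons]
    have h0a := h0 a (mem_cons_self a s)
    have h1a := h1 a (mem_cons_self a s)
    have ih' := ih (fun i hi => h0 i (mem_cons.2 (Or.inr hi)))
      (fun i hi => h1 i (mem_cons.2 (Or.inr hi)))
    have hs0 : 0 ≤ ∑ i ∈ s, f i :=
      Finset.sum_nonneg (fun i hi => h0 i (mem_cons.2 (Or.inr hi)))
    nlinarith [mul_le_mul_of_nonneg_left ih' (by linarith : (0:ℝ) ≤ 1 - f a)]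

lemma geo (r : ℝ) (h0 : 0 ≤ r) (h2 : r ≤ 1/2) : ∀ n, ∑ k ∈ range n, r ^ k ≤ 2 := by
  intro n
  induction n with
  | zero => simp
  | succ n ih =>
    rw [Finset.sum_range_succ']
    have : ∑ i ∈ range n, r ^ (i + 1) = r * ∑ i ∈ range n, r ^ i := by
      rw [Finset.mul_sum]; exact Finset.sum_congr rfl (fun i _ => by ring)
    rw [this]
    have hrs : 0 ≤ ∑ i ∈ range n, r ^ i :=
      Finset.sum_nonneg fun i _ => pow_nonneg h0 i
    nlinarith

lemma Qbound (s : ℕ) : (0.28 : ℝ) < ∏ k ∈ range s, (1 - (2:ℝ)⁻¹ ^ (k + 1)) := by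
  rcases lt_or_ge s 5 with h5 | h5
  · interval_cases s <;> norm_num [Finset.prod_range_succ]
  · obtain ⟨n, rfl⟩ := Nat.exists_eq_add_of_le h5
    rw [Finset.prod_range_add]
    have hhead : ∏ k ∈ range 5, (1 - (2:ℝ)⁻¹ ^ (k + 1)) = 9765 / 32768 := by
      norm_num [Finset.prod_range_succ]
    have htail : (31/32 : ℝ) ≤ ∏ i ∈ range n, (1 - (2:ℝ)⁻¹ ^ (5 + i + 1)) := by
      have hw := weier (range n) (fun i => (2:ℝ)⁻¹ ^ (5 + i + 1))
        (fun i _ => by positivity)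
        (fun i _ => by
          apply pow_le_one₀ <;> norm_num)
      have hsum : ∑ i ∈ range n, (2:ℝ)⁻¹ ^ (5 + i + 1) ≤ 1/32 := by
        have : ∀ i, (2:ℝ)⁻¹ ^ (5 + i + 1) = (1/64) * (2:ℝ)⁻¹ ^ i := by
          intro i; rw [show 5 + i + 1 = 6 + i by ring, pow_add]; norm_num
        rw [Finset.sum_congr rfl (fun i _ => this i), ← Finset.mul_sum]
        have := geo (2:ℝ)⁻¹ (by norm_num) (by norm_num) n
        nlinarith
      calc (31/32 : ℝ) ≤ 1 - ∑ i ∈ range n, (2:ℝ)⁻¹ ^ (5 + i + 1) := by linarith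
        _ ≤ _ := hw
    rw [hhead]
    nlinarith

lemma main_ineq (q : ℕ) (hq : 2 ≤ q) (s t : ℕ) (hs : 0 < s) (hst : s ≤ t) :
    (1 - tau ((q:ℝ)⁻¹ ^ (t - s + 1))) * (q:ℝ) ^ (s * t) <
      ∏ i ∈ range s, ((q:ℝ) ^ t - (q:ℝ) ^ i) := by
  have hq2 : (2:ℝ) ≤ (q:ℝ) := by exact_mod_cast hq
  have hqpos : (0:ℝ) < (q:ℝ) := by linarith
  set r : ℝ := (q:ℝ)⁻¹ with hr_def
  have hr0 : 0 ≤ r := by positivity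
  have hrpos : 0 < r := by positivity
  have hr2 : r ≤ 1/2 := by
    rw [hr_def]
    rw [inv_le_comm₀ hqpos (by norm_num)]
    linarith
  have hr1 : r ≤ 1 := by linarith
  set x : ℝ := r ^ (t - s + 1) with hx_def
  have hx0 : 0 < x := pow_pos hrpos _
  -- rewrite the product
  have hfac : ∀ i ∈ range s, (q:ℝ) ^ t - (q:ℝ) ^ i = (q:ℝ) ^ t * (1 - r ^ (t - i)) := by
    intro i hi
    have hit : i ≤ t := le_trans (le_of_lt (mem_range.mp hi)) hst
    have hqt : (q:ℝ) ^ i * (q:ℝ) ^ (t - i) = (q:ℝ) ^ t := by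
      rw [← pow_add]; congr 1; omega
    have hprt : (q:ℝ) ^ t * r ^ (t - i) = (q:ℝ) ^ i := by
      rw [hr_def, inv_pow]
      field_simp
      linarith [hqt]
    rw [mul_sub, mul_one, hprt]
  rw [Finset.prod_congr rfl hfac, Finset.prod_mul_distrib, Finset.prod_const,
    Finset.card_range, ← pow_mul, mul_comm t s]
  have hpows : (0:ℝ) < (q:ℝ) ^ (s * t) := by positivity
  rw [mul_comm ((q:ℝ) ^ (s*t))]
  apply mul_lt_mul_of_pos_right _ hpows
  -- now: 1 - tau x < ∏ i ∈ range s, (1 - r ^ (t - i))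
  set P : ℝ := ∏ i ∈ range s, (1 - r ^ (t - i)) with hP_def
  have hfb : ∀ i ∈ range s, r ^ (t - i) ≤ 1/2 := by
    intro i hi
    have h1le : 1 ≤ t - i := by have := mem_range.mp hi; omega
    calc r ^ (t - i) ≤ r ^ 1 := pow_le_pow_of_le_one hr0 hr1 h1le
      _ ≤ 1/2 := by rwa [pow_one]
  have hsum : ∑ i ∈ range s, r ^ (t - i) ≤ 2 * x := by
    have hre : ∀ i ∈ range s, r ^ (t - i) = x * r ^ (s - 1 - i) := by
      intro i hi
      rw [hx_def, ← pow_add]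
      congr 1
      have := mem_range.mp hi; omega
    rw [Finset.sum_congr rfl hre, ← Finset.mul_sum]
    have : ∑ i ∈ range s, r ^ (s - 1 - i) = ∑ i ∈ range s, r ^ i :=
      Finset.sum_range_reflect (fun i => r ^ i) s
    rw [this]
    have := geo r hr0 hr2 s
    nlinarith
  have hPS : 1 - ∑ i ∈ range s, r ^ (t - i) ≤ P :=
    weier (range s) (fun i => r ^ (t - i)) (fun i _ => by positivity)
      (fun i hi => by linarith [hfb i hi])
  rcases min_cases (0.72 : ℝ) (2.1 * x) with ⟨hmin, hle⟩ | ⟨hmin, hlt⟩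
  · -- tau x = 0.72, so 2.1 x ≥ 0.72, forcing q = 2, t = s
    rw [tau, hmin]
    have hx13 : (1:ℝ)/3 < x := by linarith
    have hts : t = s := by
      by_contra hne
      have h2 : 2 ≤ t - s + 1 := by omega
      have : x ≤ r ^ 2 :=
        pow_le_pow_of_le_one hr0 hr1 h2
      nlinarith
    have hq2' : q = 2 := by
      by_contra hne
      have : 3 ≤ q := by omega
      have h3 : (3:ℝ) ≤ (q:ℝ) := by exact_mod_cast this
      have : r ≤ 1/3 := by
        rw [hr_def, inv_le_comm₀ hqpos (by norm_num)]; linarith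
      have hxr : x ≤ r := by
        rw [hx_def]
        calc r ^ (t - s + 1) ≤ r ^ 1 := pow_le_pow_of_le_one hr0 hr1 (by omega)
          _ = r := pow_one r
      linarith
    have hPQ : P = ∏ k ∈ range s, (1 - (2:ℝ)⁻¹ ^ (k + 1)) := by
      rw [hP_def]
      have hfac2 : ∀ i ∈ range s, 1 - r ^ (t - i) = 1 - (2:ℝ)⁻¹ ^ ((s - 1 - i) + 1) := by
        intro i hi
        have hi' := mem_range.mp hi
        rw [hr_def, hq2', hts]
        push_cast
        have : s - i = s - 1 - i + 1 := by omega
        rw [this]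
      rw [Finset.prod_congr rfl hfac2]
      exact Finset.prod_range_reflect (fun k => 1 - (2:ℝ)⁻¹ ^ (k + 1)) s
    rw [hPQ]
    have := Qbound s
    norm_num at this ⊢
    linarith
  · rw [tau, hmin]
    calc 1 - 2.1 * x < 1 - 2 * x := by linarith
      _ ≤ 1 - ∑ i ∈ range s, r ^ (t - i) := by linarith
      _ ≤ P := hPS

lemma card_full (F : Type*) [Field F] [Fintype F] (s t : ℕ) (hst : s ≤ t) :
    Nat.card {A : Matrix (Fin s) (Fin t) F // A.rank = s} =
      ∏ i ∈ range s, (Fintype.card F ^ t - Fintype.card F ^ i) := by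
  have h1 : ∀ A : Matrix (Fin s) (Fin t) F, A.rank = s ↔ LinearIndependent F A := by
    intro A
    constructor
    · intro h
      apply linearIndependent_iff_card_eq_finrank_span.mpr; rw [Fintype.card_fin]
      rw [Matrix.rank_eq_finrank_span_row] at h
      simp only [Set.finrank]; exact h.symm
    · intro h
      rw [h.rank_matrix, Fintype.card_fin]
  have e2 : {A : Matrix (Fin s) (Fin t) F // LinearIndependent F A} ≃
      {f : Fin s → (Fin t → F) // LinearIndependent F f} :=
    Equiv.subtypeEquiv (Equiv.refl _) (fun A => Iff.rfl)
  rw [Nat.card_congr ((Equiv.subtypeEquivRight h1).trans e2),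
    card_linearIndependent (K := F) (V := Fin t → F)
      (by rw [Module.finrank_fintype_fun_eq_card, Fintype.card_fin]; exact hst)]
  simp only [Module.finrank_fintype_fun_eq_card, Fintype.card_fin]
  exact Fin.prod_univ_eq_prod_range (fun i => Fintype.card F ^ t - Fintype.card F ^ i) s

lemma cast_card_full (F : Type*) [Field F] [Fintype F] (s t : ℕ) (hst : s ≤ t) :
    (Nat.card {A : Matrix (Fin s) (Fin t) F // A.rank = s} : ℝ) =
      ∏ i ∈ range s, ((Fintype.card F : ℝ) ^ t - (Fintype.card F : ℝ) ^ i) := by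
  rw [card_full F s t hst]
  push_cast [Nat.cast_prod]
  apply Finset.prod_congr rfl
  intro i hi
  have hle : Fintype.card F ^ i ≤ Fintype.card F ^ t :=
    Nat.pow_le_pow_right Fintype.card_pos (le_trans (le_of_lt (mem_range.mp hi)) hst)
  push_cast [Nat.cast_sub hle]
  ring

theorem stmt3 (F : Type*) [Field F] [Fintype F] (s t : ℕ) (hs : 0 < s) (ht : 0 < t) :
    (1 - tau ((Fintype.card F : ℝ)⁻¹ ^ (max s t - min s t + 1))) *
        (Fintype.card F : ℝ) ^ (s * t) <
      (Nat.card {A : Matrix (Fin s) (Fin t) F // A.rank = min s t} : ℝ) := by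
  have hq : 2 ≤ Fintype.card F := Fintype.one_lt_card
  rcases le_total s t with hst | hst
  · rw [min_eq_left hst, max_eq_right hst]
    have : (Nat.card {A : Matrix (Fin s) (Fin t) F // A.rank = s} : ℝ) =
        ∏ i ∈ range s, ((Fintype.card F : ℝ) ^ t - (Fintype.card F : ℝ) ^ i) :=
      cast_card_full F s t hst
    rw [this]
    exact main_ineq (Fintype.card F) hq s t hs hst
  · rw [min_eq_right hst, max_eq_left hst]
    have e : {A : Matrix (Fin s) (Fin t) F // A.rank = t} ≃
        {B : Matrix (Fin t) (Fin s) F // B.rank = t} :=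
      { toFun := fun A => ⟨Matrix.transpose A.1, by rw [Matrix.rank_transpose]; exact A.2⟩
        invFun := fun B => ⟨Matrix.transpose B.1, by rw [Matrix.rank_transpose]; exact B.2⟩
        left_inv := fun A => by simp
        right_inv := fun B => by simp }
    rw [Nat.card_congr e, cast_card_full F t s hst, mul_comm s t]
    exact main_ineq (Fintype.card F) hq t s ht hst
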